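/- For all coordinate vectors U = (u₁,u₂,u₃,u₄,U₅,U₆) and V = (v₁,v₂,v₃,v₄,V₅,V₆) in ℝ⁴ × ℝ^(2s) × ℝ^(2s): (i) L(U)ᵀ·η·L(U) = η, where η is the N×N symmetric matrix with η_{1,N} = η_{N,1} = η_{2,N−1} = η_{N−1,2} = 1, ηᵢᵢ = 1 for 3 ≤ i ≤ N−2, and all other entries 0; (ii) L(U) is invertible and L(U)⁻¹·L(V) = L(W), where W = (w₁,w₂,w₃,w₄,W₅,W₆) is given by: w₁ = v₁ − u₁; w₂ = v₂ − u₂; w₃ = v₃ − e^(u₁−u₂−v₁+v₂)·u₃; w₄ = v₄ + (1/√2)·e^(u₂−v₁−v₂)·(e^(u₁)·⟨U₅,U₆⟩ − e^(v₁)·⟨U₆,V₅⟩) − (1/4)·e^(2(u₂−v₂))·v₃·‖U₆‖² + (1/4)·e^(u₁+u₂−v₁−v₂)·(u₃·‖U₆‖² − 4·u₄); W₅ = V₅ + (1/√2)·e^(u₂−v₂)·v₃·U₆ − (1/2)·e^(u₁−v₁)·(√2·u₃·U₆ + 2·U₅); W₆ = V₆ − e^(u₂−v₂)·U₆. In particular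 the matrices L(Υ) form a group. -/

import Mathlib

open Matrix

/-- Index type for an `N×N` matrix with `N = 2s+4`: indices `1,2`, then `2s` middle
indices, then indices `N−1, N`. -/
abbrev SolvIdx2 (s : ℕ) := Fin 2 ⊕ Fin (2 * s) ⊕ Fin 2

/-- The solvable coset representative `L(Υ)` of `SO(2,2+2s)/(SO(2)×SO(2+2s))` in the
solvable coordinates `Υ = (Υ₁,Υ₂,Υ₃,Υ₄,Υ₅,Υ₆) ∈ ℝ⁴ × ℝ^{2s} × ℝ^{2s}`. -/
noncomputable def Lsolv2 (s : ℕ) (a₁ a₂ a₃ a₄ : ℝ) (A₅ A₆ : Fin (2 * s) → ℝ) :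
    Matrix (SolvIdx2 s) (SolvIdx2 s) ℝ :=
  Matrix.of fun i j =>
    match i, j with
    | Sum.inl i, Sum.inl j =>
        if i = 0 ∧ j = 0 then Real.exp a₁
        else if i = 0 ∧ j = 1 then Real.exp a₁ / Real.sqrt 2 * a₃
        else if i = 1 ∧ j = 1 then Real.exp a₂
        else 0
    | Sum.inl i, Sum.inr (Sum.inl k) =>
        if i = 0 then (1 / 2) * Real.exp a₁ * (Real.sqrt 2 * A₅ k + a₃ * A₆ k)
        else Real.exp a₂ / Real.sqrt 2 * A₆ k
    | Sum.inl i, Sum.inr (Sum.inr j) =>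
        if i = 0 then
          (if j = 0 then
              Real.exp a₁ * (-(1 / 2) * (∑ k, A₅ k * A₆ k)
                - a₃ * (∑ k, A₆ k ^ 2) / (4 * Real.sqrt 2) + a₄ / Real.sqrt 2)
            else -(1 / 4) * Real.exp a₁ * ((∑ k, A₅ k ^ 2) + 2 * a₃ * a₄))
        else
          (if j = 0 then -(1 / 4) * Real.exp a₂ * (∑ k, A₆ k ^ 2)
            else -(Real.exp a₂ / Real.sqrt 2) * a₄)
    | Sum.inr (Sum.inl k), Sum.inr (Sum.inl l) => if k = l then 1 else 0
    | Sum.inr (Sum.inl k), Sum.inr (Sum.inr j) =>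
        if j = 0 then -(A₆ k / Real.sqrt 2) else -(A₅ k / Real.sqrt 2)
    | Sum.inr (Sum.inr i), Sum.inr (Sum.inr j) =>
        if i = 0 ∧ j = 0 then Real.exp (-a₂)
        else if i = 0 ∧ j = 1 then -(Real.exp (-a₂) / Real.sqrt 2) * a₃
        else if i = 1 ∧ j = 1 then Real.exp (-a₁)
        else 0
    | _, _ => 0

/-- The `N×N` symmetric matrix `η` with `η_{1,N} = η_{N,1} = η_{2,N−1} = η_{N−1,2} = 1`,
`ηᵢᵢ = 1` for `3 ≤ i ≤ N−2`, and all other entries `0`. -/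
def etaSolv2 (s : ℕ) : Matrix (SolvIdx2 s) (SolvIdx2 s) ℝ :=
  Matrix.of fun i j =>
    match i, j with
    | Sum.inl i, Sum.inr (Sum.inr j) => if (i = 0 ∧ j = 1) ∨ (i = 1 ∧ j = 0) then 1 else 0
    | Sum.inr (Sum.inr i), Sum.inl j => if (i = 0 ∧ j = 1) ∨ (i = 1 ∧ j = 0) then 1 else 0
    | Sum.inr (Sum.inl k), Sum.inr (Sum.inl l) => if k = l then 1 else 0
    | _, _ => 0


lemma etaSolv2_mul_self (s : ℕ) : etaSolv2 s * etaSolv2 s = 1 := by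
  ext i j
  rcases i with i | k | i <;> rcases j with j | l | j <;>
    simp [etaSolv2, Matrix.mul_apply, Fintype.sum_sum_type, Fin.sum_univ_two,
      Matrix.one_apply] <;>
    fin_cases i <;> fin_cases j <;> simp

set_option maxHeartbeats 2000000 in
lemma Lsolv2_transpose_eta (s : ℕ) (u₁ u₂ u₃ u₄ : ℝ) (U₅ U₆ : Fin (2 * s) → ℝ) :
    (Lsolv2 s u₁ u₂ u₃ u₄ U₅ U₆)ᵀ * etaSolv2 s * Lsolv2 s u₁ u₂ u₃ u₄ U₅ U₆ = etaSolv2 s := by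
  have h2 : Real.sqrt 2 * Real.sqrt 2 = 2 := Real.mul_self_sqrt (by norm_num)
  have h0 : Real.sqrt 2 ≠ 0 := by positivity
  have h2p : Real.sqrt 2 ^ 2 = (2:ℝ) := by rw [sq, h2]
  have h3p : Real.sqrt 2 ^ 3 = 2 * Real.sqrt 2 := by rw [pow_succ, h2p]
  have h4p : Real.sqrt 2 ^ 4 = (4:ℝ) := by rw [show 4 = 2+2 from rfl, pow_add, h2p]; norm_num
  ext i j
  rcases i with i | k | i <;> rcases j with j | l | j <;>
    [fin_cases i <;> fin_cases j; fin_cases i; fin_cases i <;> fin_cases j;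
     fin_cases j; skip; fin_cases j; fin_cases i <;> fin_cases j; fin_cases i;
     fin_cases i <;> fin_cases j] <;>
    simp [Lsolv2, etaSolv2, Matrix.mul_apply, Fintype.sum_sum_type, Fin.sum_univ_two] <;>
    simp only [Real.exp_neg, pow_two, div_mul_div_comm, h2, ← Finset.sum_div] <;>
    field_simp <;> ring_nf <;>
    (try simp only [h2p, h3p, h4p, pow_two]) <;> (try ring_nf) <;>
    simp [mul_comm] <;> ring_nf <;> simp [sq]

set_option maxHeartbeats 8000000 in
lemma Lsolv2_mul_law (s : ℕ) (u₁ u₂ u₃ u₄ v₁ v₂ v₃ v₄ : ℝ) (U₅ U₆ V₅ V₆ : Fin (2 * s) → ℝ) :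
    Lsolv2 s u₁ u₂ u₃ u₄ U₅ U₆ *
      Lsolv2 s (v₁ - u₁) (v₂ - u₂)
        (v₃ - Real.exp (u₁ - u₂ - v₁ + v₂) * u₃)
        (v₄ + (1 / Real.sqrt 2) * Real.exp (u₂ - v₁ - v₂) *
            (Real.exp u₁ * (∑ k, U₅ k * U₆ k) - Real.exp v₁ * (∑ k, U₆ k * V₅ k))
          - (1 / 4) * Real.exp (2 * (u₂ - v₂)) * v₃ * (∑ k, U₆ k ^ 2)
          + (1 / 4) * Real.exp (u₁ + u₂ - v₁ - v₂) * (u₃ * (∑ k, U₆ k ^ 2) - 4 * u₄))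
        (V₅ + ((1 / Real.sqrt 2) * Real.exp (u₂ - v₂) * v₃) • U₆
          - ((1 / 2) * Real.exp (u₁ - v₁)) • ((Real.sqrt 2 * u₃) • U₆ + (2 : ℝ) • U₅))
        (V₆ - Real.exp (u₂ - v₂) • U₆)
      = Lsolv2 s v₁ v₂ v₃ v₄ V₅ V₆ := by
  have h2 : Real.sqrt 2 * Real.sqrt 2 = 2 := Real.mul_self_sqrt (by norm_num)
  have h0 : Real.sqrt 2 ≠ 0 := by positivity
  have h2p : Real.sqrt 2 ^ 2 = (2:ℝ) := by rw [sq, h2]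
  have h3p : Real.sqrt 2 ^ 3 = 2 * Real.sqrt 2 := by rw [pow_succ, h2p]
  have h4p : Real.sqrt 2 ^ 4 = (4:ℝ) := by rw [pow_succ, h3p, mul_assoc, h2]; norm_num
  have h5p : Real.sqrt 2 ^ 5 = 4 * Real.sqrt 2 := by rw [pow_succ, h4p]
  have h6p : Real.sqrt 2 ^ 6 = (8:ℝ) := by rw [pow_succ, h5p, mul_assoc, h2]; norm_num
  have h7p : Real.sqrt 2 ^ 7 = 8 * Real.sqrt 2 := by rw [pow_succ, h6p]
  have h8p : Real.sqrt 2 ^ 8 = (16:ℝ) := by rw [pow_succ, h7p, mul_assoc, h2]; norm_num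
  have h9p : Real.sqrt 2 ^ 9 = 16 * Real.sqrt 2 := by rw [pow_succ, h8p]
  have h10p : Real.sqrt 2 ^ 10 = (32:ℝ) := by rw [pow_succ, h9p, mul_assoc, h2]; norm_num
  have h11p : Real.sqrt 2 ^ 11 = 32 * Real.sqrt 2 := by rw [pow_succ, h10p]
  have h12p : Real.sqrt 2 ^ 12 = (64:ℝ) := by rw [pow_succ, h11p, mul_assoc, h2]; norm_num
  have h13p : Real.sqrt 2 ^ 13 = 64 * Real.sqrt 2 := by rw [pow_succ, h12p]
  have h14p : Real.sqrt 2 ^ 14 = (128:ℝ) := by rw [pow_succ, h13p, mul_assoc, h2]; norm_num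
  have h15p : Real.sqrt 2 ^ 15 = 128 * Real.sqrt 2 := by rw [pow_succ, h14p]
  have h16p : Real.sqrt 2 ^ 16 = (256:ℝ) := by rw [pow_succ, h15p, mul_assoc, h2]; norm_num
  have h17p : Real.sqrt 2 ^ 17 = 256 * Real.sqrt 2 := by rw [pow_succ, h16p]
  have h18p : Real.sqrt 2 ^ 18 = (512:ℝ) := by rw [pow_succ, h17p, mul_assoc, h2]; norm_num
  have h19p : Real.sqrt 2 ^ 19 = 512 * Real.sqrt 2 := by rw [pow_succ, h18p]
  have h20p : Real.sqrt 2 ^ 20 = (1024:ℝ) := by rw [pow_succ, h19p, mul_assoc, h2]; norm_num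
  have h21p : Real.sqrt 2 ^ 21 = 1024 * Real.sqrt 2 := by rw [pow_succ, h20p]
  have h22p : Real.sqrt 2 ^ 22 = (2048:ℝ) := by rw [pow_succ, h21p, mul_assoc, h2]; norm_num
  have h23p : Real.sqrt 2 ^ 23 = 2048 * Real.sqrt 2 := by rw [pow_succ, h22p]
  have h24p : Real.sqrt 2 ^ 24 = (4096:ℝ) := by rw [pow_succ, h23p, mul_assoc, h2]; norm_num
  have hS1 : (∑ x : Fin (2 * s), (V₅ x + (Real.sqrt 2)⁻¹ * Real.exp (u₂ - v₂) * v₃ * U₆ x - (2⁻¹ * Real.exp (u₁ - v₁) * (Real.sqrt 2 * u₃ * U₆ x) + 2⁻¹ * Real.exp (u₁ - v₁) * (2 * U₅ x))) * (V₆ x - Real.exp (u₂ - v₂) * U₆ x))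
      = (∑ x : Fin (2 * s), V₅ x * V₆ x) + ((Real.sqrt 2)⁻¹ * Real.exp (u₂ - v₂) * v₃ - 2⁻¹ * Real.exp (u₁ - v₁) * (Real.sqrt 2 * u₃)) * (∑ x : Fin (2 * s), U₆ x * V₆ x) + (-Real.exp (u₁ - v₁)) * (∑ x : Fin (2 * s), U₅ x * V₆ x) - Real.exp (u₂ - v₂) * (∑ x : Fin (2 * s), U₆ x * V₅ x) - Real.exp (u₂ - v₂) * ((Real.sqrt 2)⁻¹ * Real.exp (u₂ - v₂) * v₃ - 2⁻¹ * Real.exp (u₁ - v₁) * (Real.sqrt 2 * u₃)) * (∑ x : Fin (2 * s), U₆ x ^ 2) - Real.exp (u₂ - v₂) * (-Real.exp (u₁ - v₁)) * (∑ x : Fin (2 * s), U₅ x * U₆ x) := by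
    simp only [Finset.mul_sum, ← Finset.sum_add_distrib, ← Finset.sum_sub_distrib]
    exact Finset.sum_congr rfl fun x _ => by ring
  have hS2 : (∑ x : Fin (2 * s), (V₆ x - Real.exp (u₂ - v₂) * U₆ x) ^ 2)
      = (∑ x : Fin (2 * s), V₆ x ^ 2) - 2 * Real.exp (u₂ - v₂) * (∑ x : Fin (2 * s), U₆ x * V₆ x) + Real.exp (u₂ - v₂) ^ 2 * (∑ x : Fin (2 * s), U₆ x ^ 2) := by
    simp only [Finset.mul_sum, ← Finset.sum_add_distrib, ← Finset.sum_sub_distrib]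
    exact Finset.sum_congr rfl fun x _ => by ring
  have hS3 : (∑ x : Fin (2 * s), (2⁻¹ * Real.exp u₁ * (Real.sqrt 2 * U₅ x + u₃ * U₆ x)) * ((V₆ x - Real.exp (u₂ - v₂) * U₆ x) / Real.sqrt 2))
      = (2⁻¹ * Real.exp u₁ * (Real.sqrt 2)⁻¹) * Real.sqrt 2 * (∑ x : Fin (2 * s), U₅ x * V₆ x) + (2⁻¹ * Real.exp u₁ * (Real.sqrt 2)⁻¹) * u₃ * (∑ x : Fin (2 * s), U₆ x * V₆ x) - (2⁻¹ * Real.exp u₁ * (Real.sqrt 2)⁻¹) * (Real.sqrt 2 * Real.exp (u₂ - v₂)) * (∑ x : Fin (2 * s), U₅ x * U₆ x) - (2⁻¹ * Real.exp u₁ * (Real.sqrt 2)⁻¹) * (u₃ * Real.exp (u₂ - v₂)) * (∑ x : Fin (2 * s), U₆ x ^ 2) := by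
    simp only [Finset.mul_sum, ← Finset.sum_add_distrib, ← Finset.sum_sub_distrib]
    exact Finset.sum_congr rfl fun x _ => by ring
  have hS4 : (∑ x : Fin (2 * s), (V₅ x + (Real.sqrt 2)⁻¹ * Real.exp (u₂ - v₂) * v₃ * U₆ x - (2⁻¹ * Real.exp (u₁ - v₁) * (Real.sqrt 2 * u₃ * U₆ x) + 2⁻¹ * Real.exp (u₁ - v₁) * (2 * U₅ x))) ^ 2)
      = (∑ x : Fin (2 * s), V₅ x ^ 2) + ((Real.sqrt 2)⁻¹ * Real.exp (u₂ - v₂) * v₃ - 2⁻¹ * Real.exp (u₁ - v₁) * (Real.sqrt 2 * u₃)) ^ 2 * (∑ x : Fin (2 * s), U₆ x ^ 2) + (-Real.exp (u₁ - v₁)) ^ 2 * (∑ x : Fin (2 * s), U₅ x ^ 2) + 2 * ((Real.sqrt 2)⁻¹ * Real.exp (u₂ - v₂) * v₃ - 2⁻¹ * Real.exp (u₁ - v₁) * (Real.sqrt 2 * u₃)) * (∑ x : Fin (2 * s), U₆ x * V₅ x) + 2 * (-Real.exp (u₁ - v₁)) * (∑ x : Fin (2 * s), U₅ x * V₅ x)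 + 2 * ((Real.sqrt 2)⁻¹ * Real.exp (u₂ - v₂) * v₃ - 2⁻¹ * Real.exp (u₁ - v₁) * (Real.sqrt 2 * u₃)) * (-Real.exp (u₁ - v₁)) * (∑ x : Fin (2 * s), U₅ x * U₆ x) := by
    simp only [Finset.mul_sum, ← Finset.sum_add_distrib, ← Finset.sum_sub_distrib]
    exact Finset.sum_congr rfl fun x _ => by ring
  have hS5 : (∑ x : Fin (2 * s), (2⁻¹ * Real.exp u₁ * (Real.sqrt 2 * U₅ x + u₃ * U₆ x)) * ((V₅ x + (Real.sqrt 2)⁻¹ * Real.exp (u₂ - v₂) * v₃ * U₆ x - (2⁻¹ * Real.exp (u₁ - v₁) * (Real.sqrt 2 * u₃ * U₆ x) + 2⁻¹ * Real.exp (u₁ - v₁) * (2 * U₅ x))) / Real.sqrt 2))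
      = (2⁻¹ * Real.exp u₁ * (Real.sqrt 2)⁻¹) * Real.sqrt 2 * (∑ x : Fin (2 * s), U₅ x * V₅ x) + ((2⁻¹ * Real.exp u₁ * (Real.sqrt 2)⁻¹) * (Real.sqrt 2 * ((Real.sqrt 2)⁻¹ * Real.exp (u₂ - v₂) * v₃ - 2⁻¹ * Real.exp (u₁ - v₁) * (Real.sqrt 2 * u₃))) + (2⁻¹ * Real.exp u₁ * (Real.sqrt 2)⁻¹) * (u₃ * (-Real.exp (u₁ - v₁)))) * (∑ x : Fin (2 * s), U₅ x * U₆ x) + (2⁻¹ * Real.exp u₁ * (Real.sqrt 2)⁻¹) * (Real.sqrt 2 * (-Real.exp (u₁ - v₁))) * (∑ x : Fin (2 * s), U₅ x ^ 2) + (2⁻¹ * Real.exp u₁ * (Real.sqrt 2)⁻¹) * u₃ * (∑ x : Fin (2 * s), U₆ x * V₅ x) + (2⁻¹ * Real.exp u₁ * (Real.sqrt 2)⁻¹) * (u₃ * ((Real.sqrt 2)⁻¹ * Real.exp (u₂ - v₂) * v₃ - 2⁻¹ * Real.exp (u₁ - v₁) * (Real.sqrt 2 * u₃))) * (∑ x :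 Fin (2 * s), U₆ x ^ 2) := by
    simp only [Finset.mul_sum, ← Finset.sum_add_distrib, ← Finset.sum_sub_distrib]
    exact Finset.sum_congr rfl fun x _ => by ring
  have hS6 : (∑ x : Fin (2 * s), (Real.exp u₂ / Real.sqrt 2 * U₆ x) * ((V₆ x - Real.exp (u₂ - v₂) * U₆ x) / Real.sqrt 2))
      = (Real.exp u₂ * (Real.sqrt 2)⁻¹ * (Real.sqrt 2)⁻¹) * (∑ x : Fin (2 * s), U₆ x * V₆ x) - (Real.exp u₂ * (Real.sqrt 2)⁻¹ * (Real.sqrt 2)⁻¹) * Real.exp (u₂ - v₂) * (∑ x : Fin (2 * s), U₆ x ^ 2) := by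
    simp only [Finset.mul_sum, ← Finset.sum_add_distrib, ← Finset.sum_sub_distrib]
    exact Finset.sum_congr rfl fun x _ => by ring
  have hS7 : (∑ x : Fin (2 * s), (Real.exp u₂ / Real.sqrt 2 * U₆ x) * ((V₅ x + (Real.sqrt 2)⁻¹ * Real.exp (u₂ - v₂) * v₃ * U₆ x - (2⁻¹ * Real.exp (u₁ - v₁) * (Real.sqrt 2 * u₃ * U₆ x) + 2⁻¹ * Real.exp (u₁ - v₁) * (2 * U₅ x))) / Real.sqrt 2))
      = (Real.exp u₂ * (Real.sqrt 2)⁻¹ * (Real.sqrt 2)⁻¹) * (∑ x : Fin (2 * s), U₆ x * V₅ x) + (Real.exp u₂ * (Real.sqrt 2)⁻¹ * (Real.sqrt 2)⁻¹) * ((Real.sqrt 2)⁻¹ * Real.exp (u₂ - v₂) * v₃ - 2⁻¹ * Real.exp (u₁ - v₁) * (Real.sqrt 2 * u₃)) * (∑ x : Fin (2 * s), U₆ x ^ 2) + (Real.exp u₂ * (Real.sqrt 2)⁻¹ * (Real.sqrt 2)⁻¹) * (-Real.exp (u₁ - v₁)) * (∑ x : Fin (2 * s), U₅ x * U₆ x)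 := by
    simp only [Finset.mul_sum, ← Finset.sum_add_distrib, ← Finset.sum_sub_distrib]
    exact Finset.sum_congr rfl fun x _ => by ring
  ext i j
  rcases i with i | k | i <;> rcases j with j | l | j <;>
    [fin_cases i <;> fin_cases j; fin_cases i; fin_cases i <;> fin_cases j;
     fin_cases j; skip; fin_cases j; fin_cases i <;> fin_cases j; fin_cases i;
     fin_cases i <;> fin_cases j] <;>
    simp [Lsolv2, Matrix.mul_apply, Fintype.sum_sum_type, Fin.sum_univ_two]
  all_goals try simp only [hS1, hS2, hS3, hS4, hS5, hS6, hS7]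
  all_goals simp only [Real.exp_sub, Real.exp_add, Real.exp_neg, two_mul]
  all_goals field_simp
  all_goals ring_nf
  all_goals simp only [h2p, h3p, h4p, h5p, h6p, h7p, h8p, h9p, h10p, h11p, h12p, h13p, h14p, h15p, h16p, h17p, h18p, h19p, h20p, h21p, h22p, h23p, h24p]
  all_goals try ring_nf
  all_goals try (simp [sq, mul_comm]; ring_nf)

/-- **The solvable group law of `SO(2,2+2s)/(SO(2)×SO(2+2s))`.**
(i) `L(U)ᵀ·η·L(U) = η`; (ii) `L(U)` is invertible and `L(U)⁻¹·L(V) = L(W)` with the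
explicit product coordinates `W`.  In particular the matrices `L(Υ)` form a group. -/
theorem stmt_8 (s : ℕ) (hs : 1 ≤ s)
    (u₁ u₂ u₃ u₄ v₁ v₂ v₃ v₄ : ℝ) (U₅ U₆ V₅ V₆ : Fin (2 * s) → ℝ) :
    (Lsolv2 s u₁ u₂ u₃ u₄ U₅ U₆)ᵀ * etaSolv2 s * Lsolv2 s u₁ u₂ u₃ u₄ U₅ U₆ = etaSolv2 s ∧
    IsUnit (Lsolv2 s u₁ u₂ u₃ u₄ U₅ U₆) ∧
    (Lsolv2 s u₁ u₂ u₃ u₄ U₅ U₆)⁻¹ * Lsolv2 s v₁ v₂ v₃ v₄ V₅ V₆ =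
      Lsolv2 s (v₁ - u₁) (v₂ - u₂)
        (v₃ - Real.exp (u₁ - u₂ - v₁ + v₂) * u₃)
        (v₄ + (1 / Real.sqrt 2) * Real.exp (u₂ - v₁ - v₂) *
            (Real.exp u₁ * (∑ k, U₅ k * U₆ k) - Real.exp v₁ * (∑ k, U₆ k * V₅ k))
          - (1 / 4) * Real.exp (2 * (u₂ - v₂)) * v₃ * (∑ k, U₆ k ^ 2)
          + (1 / 4) * Real.exp (u₁ + u₂ - v₁ - v₂) * (u₃ * (∑ k, U₆ k ^ 2) - 4 * u₄))
        (V₅ + ((1 / Real.sqrt 2) * Real.exp (u₂ - v₂) * v₃) • U₆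
          - ((1 / 2) * Real.exp (u₁ - v₁)) • ((Real.sqrt 2 * u₃) • U₆ + (2 : ℝ) • U₅))
        (V₆ - Real.exp (u₂ - v₂) • U₆) := by
  have part1 := Lsolv2_transpose_eta s u₁ u₂ u₃ u₄ U₅ U₆
  have hη : IsUnit (etaSolv2 s) :=
    ⟨⟨etaSolv2 s, etaSolv2 s, etaSolv2_mul_self s, etaSolv2_mul_self s⟩, rfl⟩
  have hdetη : IsUnit (etaSolv2 s).det := (Matrix.isUnit_iff_isUnit_det _).mp hη
  have hdet : IsUnit (Lsolv2 s u₁ u₂ u₃ u₄ U₅ U₆).det := by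
    have h := congrArg Matrix.det part1
    simp only [Matrix.det_mul, Matrix.det_transpose] at h
    have h2 : (etaSolv2 s).det * ((Lsolv2 s u₁ u₂ u₃ u₄ U₅ U₆).det *
        (Lsolv2 s u₁ u₂ u₃ u₄ U₅ U₆).det) = (etaSolv2 s).det * 1 := by
      linear_combination h
    exact IsUnit.of_mul_eq_one _ (hdetη.mul_left_cancel h2)
  have hL : IsUnit (Lsolv2 s u₁ u₂ u₃ u₄ U₅ U₆) := (Matrix.isUnit_iff_isUnit_det _).mpr hdet
  refine ⟨part1, hL, ?_⟩
  rw [← Lsolv2_mul_law s u₁ u₂ u₃ u₄ v₁ v₂ v₃ v₄ U₅ U₆ V₅ V₆, ← Matrix.mul_assoc,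
    Matrix.nonsing_inv_mul _ hdet, Matrix.one_mul]
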